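/- arXiv:1812.07432 — 2 statements merged into one kernel-verified Lean document; each statement's English description precedes it below -/
import Mathlib

section
/- Let b be a non-extreme point of the closed unit ball of H^∞ with mate a. Then for any sequence (λ_n) ⊂ 𝔻 with |λ_n| → 1, the normalized Cauchy kernels k_{λ_n}/‖k_{λ_n}‖_b converge weakly to 0 in ℋ(b). -/
open Complex Metric MeasureTheory Filter Set Topology

noncomputable section

/-- `φ` is a bounded analytic function on the open unit disc (i.e. `φ ∈ H^∞`). -/
def Hinf (φ : ℂ → ℂ) : Prop :=
  DifferentiableOn ℂ φ (Metric.ball (0:ℂ) 1) ∧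
    ∃ M : ℝ, ∀ z ∈ Metric.ball (0:ℂ) 1, ‖φ z‖ ≤ M

/-- The closed unit ball of `H^∞`. -/
def unitBallHinf : Set (ℂ → ℂ) :=
  {g | DifferentiableOn ℂ g (Metric.ball (0:ℂ) 1) ∧ ∀ z ∈ Metric.ball (0:ℂ) 1, ‖g z‖ ≤ 1}

/-- `b` is an extreme point of the closed unit ball of `H^∞` (functions being identified
when they agree on the unit disc). -/
def IsExtremePt (b : ℂ → ℂ) : Prop :=
  b ∈ unitBallHinf ∧ ∀ g ∈ unitBallHinf, ∀ h ∈ unitBallHinf,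
    (∀ z ∈ Metric.ball (0:ℂ) 1, b z = (g z + h z) / 2) →
    ∀ z ∈ Metric.ball (0:ℂ) 1, g z = h z

/-- `b` is a non-extreme point of the closed unit ball of `H^∞`. -/
def IsNonExtremePt (b : ℂ → ℂ) : Prop := b ∈ unitBallHinf ∧ ¬ IsExtremePt b

/-- The spectrum `σ(b) = {ζ ∈ clos 𝔻 : liminf_{z→ζ, z∈𝔻} |b z| < 1}`. -/
def specb (b : ℂ → ℂ) : Set ℂ :=
  {ζ | ζ ∈ closure (Metric.ball (0:ℂ) 1) ∧
    Filter.liminf (fun z => ‖b z‖) (nhdsWithin ζ (Metric.ball (0:ℂ) 1)) < 1}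

/-- Arc-length (Lebesgue) measure on the unit circle, realized as the pushforward of
Lebesgue measure on `[0, 2π)` by `θ ↦ exp(iθ)`. -/
def circleMeasure : Measure ℂ :=
  Measure.map (fun θ : ℝ => Complex.exp (θ * Complex.I))
    (volume.restrict (Set.Ico (0:ℝ) (2 * Real.pi)))

/-- `b` is an inner ℂ function: `b ∈ H^∞` and the radial limits of `|b|` equal `1`
almost everywhere on the unit circle. -/
def IsInnerFn (b : ℂ → ℂ) : Prop :=
  Hinf b ∧ ∀ᵐ (θ : ℝ) ∂(volume.restrict (Set.Ico (0:ℝ) (2 * Real.pi))),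
    Filter.Tendsto (fun r : ℝ => ‖b ((r : ℂ) * Complex.exp (θ * Complex.I))‖)
      (nhdsWithin 1 (Set.Iio 1)) (nhds 1)

/-- A bounded operator is hypercyclic if some vector has dense orbit. -/
def Hypercyclic {H : Type*} [NormedAddCommGroup H] [NormedSpace ℂ H]
    (T : H →L[ℂ] H) : Prop :=
  ∃ x : H, Dense (Set.range fun n : ℕ => (T ^ n) x)

/-- Lower density of a set of natural numbers. -/
def lowerDensity (A : Set ℕ) : ℝ :=
  Filter.liminf (fun N : ℕ => (Nat.card ↥(A ∩ Set.Iio N) : ℝ) / N) Filter.atTop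

/-- A bounded operator is frequently hypercyclic if some vector visits every nonempty
open set along a set of instants of positive lower density. -/
def FreqHypercyclic {H : Type*} [NormedAddCommGroup H] [NormedSpace ℂ H]
    (T : H →L[ℂ] H) : Prop :=
  ∃ x : H, ∀ U : Set H, IsOpen U → U.Nonempty →
    0 < lowerDensity {n : ℕ | (T ^ n) x ∈ U}

/--
Abstract model of the Hardy-space / de Branges–Rovnyak setting attached to a function
`b` in the closed unit ball of `H^∞`:
* `H2` is the Hardy space `H²`, realized as the reproducing-kernel Hilbert space of
  analytic functions on `𝔻` with Szegő kernel `k_λ(z) = (1 - conj λ z)⁻¹`;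
* `Hb` is the de Branges–Rovnyak space `ℋ(b)`, the RKHS with kernel
  `k_λ^b(z) = (1 - conj (b λ) b z) / (1 - conj λ z)`, contractively contained in `H²`
  via `j`;
* `mul φ` is the multiplication (analytic Toeplitz) operator `M_φ = T_φ` on `H²` for
  `φ ∈ H^∞` (so the co-analytic Toeplitz operator `T_{φ̄}` is its adjoint), and
  `toepb φ` is the restriction of `T_{φ̄}` to `ℋ(b)`;
* `L2` is `L²(𝕋) ⊇ H²` with isometric embedding `emb`, Riesz projection
  `P₊ = Pplus` (the adjoint of `emb`), and multiplication operators `mulL2 u` by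
  boundary functions `u`, pinned down on continuous symbols by norm bounds,
  additivity, multiplicativity, the adjoint rule and compatibility with `mul` on
  the disc algebra;
* `shiftb` is the restricted backward shift `X_b = S*|ℋ(b)`.
-/
structure DBR (b : ℂ → ℂ) (H2 Hb L2 : Type*)
    [NormedAddCommGroup H2] [InnerProductSpace ℂ H2] [CompleteSpace H2]
    [NormedAddCommGroup Hb] [InnerProductSpace ℂ Hb] [CompleteSpace Hb]
    [NormedAddCommGroup L2] [InnerProductSpace ℂ L2] [CompleteSpace L2] where
  h2Fun : H2 →ₗ[ℂ] (ℂ → ℂ)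
  h2Fun_inj : ∀ f : H2, (∀ z ∈ Metric.ball (0:ℂ) 1, h2Fun f z = 0) → f = 0
  szego : ℂ → H2
  h2_repro : ∀ f : H2, ∀ l ∈ Metric.ball (0:ℂ) 1, h2Fun f l = inner ℂ (szego l) f
  szego_eq : ∀ l ∈ Metric.ball (0:ℂ) 1, ∀ z ∈ Metric.ball (0:ℂ) 1,
      h2Fun (szego l) z = (1 - (starRingEnd ℂ) l * z)⁻¹
  hbFun : Hb →ₗ[ℂ] (ℂ → ℂ)
  hbFun_inj : ∀ f : Hb, (∀ z ∈ Metric.ball (0:ℂ) 1, hbFun f z = 0) → f = 0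
  hbker : ℂ → Hb
  hb_repro : ∀ f : Hb, ∀ l ∈ Metric.ball (0:ℂ) 1, hbFun f l = inner ℂ (hbker l) f
  hbker_eq : ∀ l ∈ Metric.ball (0:ℂ) 1, ∀ z ∈ Metric.ball (0:ℂ) 1,
      hbFun (hbker l) z =
        (1 - (starRingEnd ℂ) (b l) * b z) / (1 - (starRingEnd ℂ) l * z)
  j : Hb →L[ℂ] H2
  j_contractive : ∀ f : Hb, ‖j f‖ ≤ ‖f‖
  j_compat : ∀ f : Hb, ∀ z ∈ Metric.ball (0:ℂ) 1, h2Fun (j f) z = hbFun f z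
  mul : (ℂ → ℂ) → (H2 →L[ℂ] H2)
  mul_spec : ∀ φ : ℂ → ℂ, Hinf φ → ∀ f : H2, ∀ z ∈ Metric.ball (0:ℂ) 1,
      h2Fun (mul φ f) z = φ z * h2Fun f z
  toepb : (ℂ → ℂ) → (Hb →L[ℂ] Hb)
  toepb_spec : ∀ φ : ℂ → ℂ, Hinf φ → ∀ f : Hb,
      j (toepb φ f) = ContinuousLinearMap.adjoint (mul φ) (j f)
  emb : H2 →ₗᵢ[ℂ] L2
  Pplus : L2 →L[ℂ] H2
  Pplus_spec : ∀ (g : L2) (f : H2), (inner ℂ (Pplus g) f : ℂ) = inner ℂ g (emb f)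
  mulL2 : (ℂ → ℂ) → (L2 →L[ℂ] L2)
  mulL2_bound : ∀ (u : ℂ → ℂ) (M : ℝ), ContinuousOn u (Metric.sphere (0:ℂ) 1) →
      (∀ ζ ∈ Metric.sphere (0:ℂ) 1, ‖u ζ‖ ≤ M) → ‖mulL2 u‖ ≤ M
  mulL2_add : ∀ u v : ℂ → ℂ, ContinuousOn u (Metric.sphere (0:ℂ) 1) →
      ContinuousOn v (Metric.sphere (0:ℂ) 1) → mulL2 (u + v) = mulL2 u + mulL2 v
  mulL2_comp : ∀ u v : ℂ → ℂ, ContinuousOn u (Metric.sphere (0:ℂ) 1) →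
      ContinuousOn v (Metric.sphere (0:ℂ) 1) →
      mulL2 (u * v) = (mulL2 u).comp (mulL2 v)
  mulL2_adj : ∀ u : ℂ → ℂ, ContinuousOn u (Metric.sphere (0:ℂ) 1) →
      ContinuousLinearMap.adjoint (mulL2 u) = mulL2 (fun z => (starRingEnd ℂ) (u z))
  mulL2_compat : ∀ φ : ℂ → ℂ, Hinf φ → ContinuousOn φ (closure (Metric.ball (0:ℂ) 1)) →
      ∀ f : H2, mulL2 φ (emb f) = emb (mul φ f)
  shiftb : Hb →L[ℂ] Hb
  shiftb_spec : ∀ f : Hb, ∀ z ∈ Metric.ball (0:ℂ) 1, z ≠ 0 →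
      hbFun (shiftb f) z = (hbFun f z - hbFun f 0) / z

variable {H2 Hb L2 : Type*}
  [NormedAddCommGroup H2] [InnerProductSpace ℂ H2] [CompleteSpace H2]
  [NormedAddCommGroup Hb] [InnerProductSpace ℂ Hb] [CompleteSpace Hb]
  [NormedAddCommGroup L2] [InnerProductSpace ℂ L2] [CompleteSpace L2]

/-- For `b` non-extreme and `(λ_n) ⊆ 𝔻` with `|λ_n| → 1`, the normalized
Cauchy kernels `k_{λ_n}/‖k_{λ_n}‖_b` converge weakly to `0` in `ℋ(b)`. -/
theorem statement5 (b : ℂ → ℂ) (D : DBR b H2 Hb L2) (hb : IsNonExtremePt b)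
    (l : ℕ → ℂ) (hl : ∀ n, l n ∈ Metric.ball (0:ℂ) 1)
    (hlim : Filter.Tendsto (fun n => ‖l n‖) Filter.atTop (nhds 1))
    (k : ℕ → Hb)
    (hk : ∀ n, ∀ w ∈ Metric.ball (0:ℂ) 1,
      D.hbFun (k n) w = (1 - (starRingEnd ℂ) (l n) * w)⁻¹) :
    ∀ f : Hb, Filter.Tendsto (fun n => (inner ℂ (‖k n‖⁻¹ • k n) f : ℂ))
      Filter.atTop (nhds 0) := by
  intro f
  -- Step 1: j (k n) = szego (l n)
  have hj : ∀ n, D.j (k n) = D.szego (l n) := by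
    intro n
    have h0 : ∀ z ∈ Metric.ball (0:ℂ) 1, D.h2Fun (D.j (k n) - D.szego (l n)) z = 0 := by
      intro z hz
      have h1 : D.h2Fun (D.j (k n)) z = D.hbFun (k n) z := D.j_compat _ z hz
      have h2 : D.hbFun (k n) z = (1 - (starRingEnd ℂ) (l n) * z)⁻¹ := hk n z hz
      have h3 : D.h2Fun (D.szego (l n)) z = (1 - (starRingEnd ℂ) (l n) * z)⁻¹ :=
        D.szego_eq (l n) (hl n) z hz
      have : D.h2Fun (D.j (k n) - D.szego (l n)) z
          = D.h2Fun (D.j (k n)) z - D.h2Fun (D.szego (l n)) z := by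
        rw [map_sub]; rfl
      rw [this, h1, h2, h3, sub_self]
    exact sub_eq_zero.mp (D.h2Fun_inj _ h0)
  -- Step 2: norm of szego
  have hsz : ∀ n, ‖D.szego (l n)‖ ^ 2 = (1 - ‖l n‖ ^ 2)⁻¹ := by
    intro n
    have hmem := hl n
    have h1 : (inner ℂ (D.szego (l n)) (D.szego (l n)) : ℂ)
        = (1 - (starRingEnd ℂ) (l n) * (l n))⁻¹ := by
      rw [← D.h2_repro (D.szego (l n)) (l n) hmem]
      exact D.szego_eq (l n) hmem (l n) hmem
    have h2 : (starRingEnd ℂ) (l n) * (l n) = ((‖l n‖ ^ 2 : ℝ) : ℂ) := by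
      rw [mul_comm, Complex.mul_conj]
      norm_cast
      rw [Complex.normSq_eq_norm_sq]
    have h3 : (inner ℂ (D.szego (l n)) (D.szego (l n)) : ℂ)
        = ((‖D.szego (l n)‖ : ℂ)) ^ 2 := inner_self_eq_norm_sq_to_K _
    have h4 : (((‖D.szego (l n)‖ ^ 2 : ℝ)) : ℂ) = (((1 - ‖l n‖ ^ 2 : ℝ))⁻¹ : ℂ) := by
      push_cast
      rw [← h3, h1, h2]
      push_cast
      ring_nf
    exact_mod_cast h4
  have hball : ∀ n, ‖l n‖ < 1 := by
    intro n; have := hl n; simpa [Metric.mem_ball, Complex.dist_eq] using this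
  -- Step 3: ‖k n‖⁻¹ → 0
  have hpos : ∀ n, (0:ℝ) < 1 - ‖l n‖ ^ 2 := by
    intro n
    have h := hball n
    nlinarith [norm_nonneg (l n)]
  have hszn : ∀ n, ‖D.szego (l n)‖ = (Real.sqrt (1 - ‖l n‖ ^ 2))⁻¹ := by
    intro n
    have h := hsz n
    rw [← Real.sqrt_sq (norm_nonneg (D.szego (l n)))]
    rw [h, ← Real.sqrt_inv]
  have hkn_lb : ∀ n, (Real.sqrt (1 - ‖l n‖ ^ 2))⁻¹ ≤ ‖k n‖ := by
    intro n
    have := D.j_contractive (k n)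
    rw [hj n, hszn n] at this
    exact this
  have hsqrt_pos : ∀ n, 0 < Real.sqrt (1 - ‖l n‖ ^ 2) := fun n => Real.sqrt_pos.mpr (hpos n)
  have hkinv_le : ∀ n, ‖k n‖⁻¹ ≤ Real.sqrt (1 - ‖l n‖ ^ 2) := by
    intro n
    have h1 : (0:ℝ) < (Real.sqrt (1 - ‖l n‖ ^ 2))⁻¹ := inv_pos.mpr (hsqrt_pos n)
    calc ‖k n‖⁻¹ ≤ ((Real.sqrt (1 - ‖l n‖ ^ 2))⁻¹)⁻¹ :=
          inv_anti₀ h1 (hkn_lb n)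
      _ = Real.sqrt (1 - ‖l n‖ ^ 2) := inv_inv _
  have hkinv0 : Filter.Tendsto (fun n => ‖k n‖⁻¹) Filter.atTop (nhds 0) := by
    have hsq : Filter.Tendsto (fun n => Real.sqrt (1 - ‖l n‖ ^ 2)) Filter.atTop (nhds 0) := by
      have h1 : Filter.Tendsto (fun n => 1 - ‖l n‖ ^ 2) Filter.atTop (nhds 0) := by
        have := hlim
        have h2 : Filter.Tendsto (fun n => ‖l n‖ ^ 2) Filter.atTop (nhds 1) := by
          simpa using this.pow 2
        simpa using (tendsto_const_nhds (x := (1:ℝ))).sub h2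
      have := (Real.continuous_sqrt.tendsto 0).comp h1
      simpa [Function.comp_def] using this
    exact squeeze_zero (fun n => inv_nonneg.mpr (norm_nonneg _)) hkinv_le hsq
  -- Step 4: tendsto on kernels, then span
  set x : ℕ → Hb := fun n => ‖k n‖⁻¹ • k n with hx
  have hxnorm : ∀ n, ‖x n‖ ≤ 1 := by
    intro n
    rw [hx]
    simp only [norm_smul, norm_inv, norm_norm]
    rcases eq_or_ne (‖k n‖) 0 with h | h
    · simp [h]
    · rw [inv_mul_cancel₀ h]
  have hxinner : ∀ n (g : Hb), (inner ℂ (x n) g : ℂ) = (‖k n‖⁻¹ : ℂ) * inner ℂ (k n) g := by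
    intro n g
    rw [hx]
    simp only
    rw [RCLike.real_smul_eq_coe_smul (K := ℂ), inner_smul_left]
    simp
  have hker : ∀ μ ∈ Metric.ball (0:ℂ) 1,
      Filter.Tendsto (fun n => (inner ℂ (x n) (D.hbker μ) : ℂ)) Filter.atTop (nhds 0) := by
    intro μ hμ
    have hμ1 : ‖μ‖ < 1 := by
      simpa [Metric.mem_ball, Complex.dist_eq] using hμ
    have hC : ∀ n, ‖(inner ℂ (k n) (D.hbker μ) : ℂ)‖ ≤ (1 - ‖μ‖)⁻¹ := by
      intro n
      have h1 : (inner ℂ (D.hbker μ) (k n) : ℂ) = (1 - (starRingEnd ℂ) (l n) * μ)⁻¹ := by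
        rw [← D.hb_repro (k n) μ hμ]
        exact hk n μ hμ
      have h2 : (inner ℂ (k n) (D.hbker μ) : ℂ) = (starRingEnd ℂ) ((1 - (starRingEnd ℂ) (l n) * μ)⁻¹) := by
        rw [← h1, ← inner_conj_symm]
      rw [h2]
      rw [map_inv₀, norm_inv]
      have h3 : 1 - ‖μ‖ ≤ ‖(starRingEnd ℂ) (1 - (starRingEnd ℂ) (l n) * μ)‖ := by
        rw [RingHomIsometric.norm_map]
        have h4 : ‖(starRingEnd ℂ) (l n) * μ‖ ≤ ‖μ‖ := by
          rw [norm_mul, RingHomIsometric.norm_map]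
          calc ‖l n‖ * ‖μ‖ ≤ 1 * ‖μ‖ :=
            mul_le_mul_of_nonneg_right (le_of_lt (hball n)) (norm_nonneg _)
            _ = ‖μ‖ := one_mul _
        calc 1 - ‖μ‖ ≤ ‖(1:ℂ)‖ - ‖(starRingEnd ℂ) (l n) * μ‖ := by
              simp only [norm_one]; linarith
          _ ≤ ‖1 - (starRingEnd ℂ) (l n) * μ‖ := norm_sub_norm_le _ _
      exact inv_anti₀ (by linarith) h3
    rw [tendsto_zero_iff_norm_tendsto_zero]
    apply squeeze_zero (fun n => norm_nonneg _) (g := fun n => ‖k n‖⁻¹ * (1 - ‖μ‖)⁻¹)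
    · intro n
      calc ‖(inner ℂ (x n) (D.hbker μ) : ℂ)‖
          = ‖k n‖⁻¹ * ‖(inner ℂ (k n) (D.hbker μ) : ℂ)‖ := by
            rw [hxinner, norm_mul]; simp
        _ ≤ ‖k n‖⁻¹ * (1 - ‖μ‖)⁻¹ :=
            mul_le_mul_of_nonneg_left (hC n) (inv_nonneg.mpr (norm_nonneg _))
    · simpa using hkinv0.mul_const ((1 - ‖μ‖)⁻¹)
  -- Step 5: tendsto on the span
  have hspan : ∀ g ∈ Submodule.span ℂ (D.hbker '' Metric.ball (0:ℂ) 1),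
      Filter.Tendsto (fun n => (inner ℂ (x n) g : ℂ)) Filter.atTop (nhds 0) := by
    intro g hg
    induction hg using Submodule.span_induction with
    | mem y hy =>
      obtain ⟨μ, hμ, rfl⟩ := hy
      exact hker μ hμ
    | zero => simp
    | add y z hy hz ihy ihz =>
      have := ihy.add ihz
      simpa [inner_add_right] using this
    | smul c y hy ihy =>
      have := ihy.const_mul c
      simpa [inner_smul_right] using this
  -- Step 6: density of the span
  have htop : (Submodule.span ℂ (D.hbker '' Metric.ball (0:ℂ) 1)).topologicalClosure = ⊤ := by
    rw [Submodule.topologicalClosure_eq_top_iff, Submodule.eq_bot_iff]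
    intro g hg
    apply D.hbFun_inj
    intro z hz
    have h1 : (inner ℂ (D.hbker z) g : ℂ) = 0 := hg _ (Submodule.subset_span ⟨z, hz, rfl⟩)
    rw [D.hb_repro g z hz, h1]
  have hfcl : f ∈ closure ((Submodule.span ℂ (D.hbker '' Metric.ball (0:ℂ) 1) : Submodule ℂ Hb) : Set Hb) := by
    rw [← Submodule.topologicalClosure_coe, htop]
    trivial
  -- Step 7: conclude
  rw [Metric.tendsto_atTop]
  intro ε hε
  obtain ⟨g, hgmem, hgdist⟩ := Metric.mem_closure_iff.mp hfcl (ε / 2) (by linarith)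
  obtain ⟨N, hN⟩ := (Metric.tendsto_atTop.mp (hspan g hgmem)) (ε / 2) (by linarith)
  refine ⟨N, fun n hn => ?_⟩
  have h1 : dist (inner ℂ (x n) g : ℂ) 0 < ε / 2 := hN n hn
  rw [dist_zero_right] at h1 ⊢
  have h2 : (inner ℂ (x n) f : ℂ) = inner ℂ (x n) g + inner ℂ (x n) (f - g) := by
    rw [← inner_add_right]; congr 1; abel
  calc ‖(inner ℂ (x n) f : ℂ)‖
      ≤ ‖(inner ℂ (x n) g : ℂ)‖ + ‖(inner ℂ (x n) (f - g) : ℂ)‖ := by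
        rw [h2]; exact norm_add_le _ _
    _ < ε / 2 + ε / 2 := by
        apply add_lt_add_of_lt_of_le h1
        have hle : ‖(inner ℂ (x n) (f - g) : ℂ)‖ ≤ ‖f - g‖ := by
          calc ‖(inner ℂ (x n) (f - g) : ℂ)‖ ≤ ‖x n‖ * ‖f - g‖ := norm_inner_le_norm _ _
            _ ≤ 1 * ‖f - g‖ := mul_le_mul_of_nonneg_right (hxnorm n) (norm_nonneg _)
            _ = ‖f - g‖ := one_mul _
        have hd : dist f g = ‖f - g‖ := dist_eq_norm f g
        linarith
    _ = ε := by ring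
end
end

section
/- Let b be an extreme point of the closed unit ball of H^∞. For any sequence (λ_n) ⊂ 𝔻 with |λ_n| → 1 and limsup |b(λ_n)| < 1, the normalized reproducing kernels k_{λ_n}^b/‖k_{λ_n}^b‖_b converge weakly to 0 in ℋ(b). -/
open Complex Metric MeasureTheory Filter Set Topology

noncomputable section

variable {H2 Hb L2 : Type*}
  [NormedAddCommGroup H2] [InnerProductSpace ℂ H2] [CompleteSpace H2]
  [NormedAddCommGroup Hb] [InnerProductSpace ℂ Hb] [CompleteSpace Hb]
  [NormedAddCommGroup L2] [InnerProductSpace ℂ L2] [CompleteSpace L2]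

/-- For `b` extreme and any sequence `(λ_n) ⊆ 𝔻` with `|λ_n| → 1` and
`limsup |b(λ_n)| < 1`, the normalized reproducing kernels `k_{λ_n}^b/‖k_{λ_n}^b‖_b`
converge weakly to `0` in `ℋ(b)`. -/
theorem statement19 (b : ℂ → ℂ) (D : DBR b H2 Hb L2) (hb : IsExtremePt b)
    (l : ℕ → ℂ) (hl : ∀ n, l n ∈ Metric.ball (0:ℂ) 1)
    (hlim : Filter.Tendsto (fun n => ‖l n‖) Filter.atTop (nhds 1))
    (hsup : Filter.limsup (fun n => ‖b (l n)‖) Filter.atTop < 1) :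
    ∀ f : Hb, Filter.Tendsto
      (fun n => (inner ℂ (‖D.hbker (l n)‖⁻¹ • D.hbker (l n)) f : ℂ))
      Filter.atTop (nhds 0) := by
  classical
  have hb1 : ∀ z ∈ Metric.ball (0:ℂ) 1, ‖b z‖ ≤ 1 := hb.1.2
  set k : ℕ → Hb := fun n => D.hbker (l n) with hkdef
  -- norm formula
  have hkn : ∀ n, ‖k n‖ ^ 2 = (1 - ‖b (l n)‖ ^ 2) / (1 - ‖l n‖ ^ 2) := by
    intro n
    have hln := hl n
    have h1 : (inner ℂ (k n) (k n) : ℂ)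
        = (1 - (starRingEnd ℂ) (b (l n)) * b (l n)) /
          (1 - (starRingEnd ℂ) (l n) * (l n)) := by
      rw [← D.hb_repro _ _ hln]
      exact D.hbker_eq _ hln _ hln
    have hip : (inner ℂ (k n) (k n) : ℂ) = (‖k n‖ : ℂ) ^ 2 := inner_self_eq_norm_sq_to_K _
    rw [h1, RCLike.conj_mul, RCLike.conj_mul] at hip
    have h2 : ((‖k n‖ ^ 2 : ℝ) : ℂ) = (((1 - ‖b (l n)‖ ^ 2) / (1 - ‖l n‖ ^ 2) : ℝ) : ℂ) := by
      push_cast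
      exact hip.symm
    exact_mod_cast h2
  have hlnlt : ∀ n, ‖l n‖ < 1 := by
    intro n; simpa using hl n
  have hden_pos : ∀ n, 0 < 1 - ‖l n‖ ^ 2 := by
    intro n
    have := hlnlt n
    nlinarith [norm_nonneg (l n)]
  -- eventual bound on numerator
  obtain ⟨s, hslt1, hsev⟩ : ∃ s : ℝ, s < 1 ∧ ∀ᶠ n in Filter.atTop, ‖b (l n)‖ < s := by
    refine ⟨(Filter.limsup (fun n => ‖b (l n)‖) Filter.atTop + 1) / 2, by linarith, ?_⟩
    apply Filter.eventually_lt_of_limsup_lt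
    · linarith
    · exact Filter.isBoundedUnder_of ⟨1, fun n => hb1 _ (hl n)⟩
  have hs_pos : 0 < s := by
    obtain ⟨n, hn⟩ := hsev.exists
    exact lt_of_le_of_lt (norm_nonneg _) hn
  have hc_pos : 0 < 1 - s ^ 2 := by nlinarith
  -- ‖k n‖ → ∞
  have hdinv : Filter.Tendsto (fun n => (1 - ‖l n‖ ^ 2)⁻¹) Filter.atTop Filter.atTop := by
    apply Filter.Tendsto.comp tendsto_inv_nhdsGT_zero
    rw [tendsto_nhdsWithin_iff]
    constructor
    · have : Filter.Tendsto (fun n => 1 - ‖l n‖ ^ 2) Filter.atTop (nhds (1 - 1 ^ 2)) :=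
        (tendsto_const_nhds.sub ((hlim.pow 2)))
      simpa using this
    · exact Filter.Eventually.of_forall fun n => hden_pos n
  have hsq_atTop : Filter.Tendsto (fun n => ‖k n‖ ^ 2) Filter.atTop Filter.atTop := by
    have h1 : Filter.Tendsto (fun n => (1 - s ^ 2) * (1 - ‖l n‖ ^ 2)⁻¹)
        Filter.atTop Filter.atTop := hdinv.const_mul_atTop hc_pos
    apply Filter.tendsto_atTop_mono' _ _ h1
    filter_upwards [hsev] with n hn
    rw [hkn n, div_eq_mul_inv]
    have hnum : 1 - s ^ 2 ≤ 1 - ‖b (l n)‖ ^ 2 := by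
      nlinarith [norm_nonneg (b (l n))]
    exact mul_le_mul_of_nonneg_right hnum (le_of_lt (inv_pos.2 (hden_pos n)))
  have hk_atTop : Filter.Tendsto (fun n => ‖k n‖) Filter.atTop Filter.atTop := by
    rw [Filter.tendsto_atTop]
    intro C
    filter_upwards [hsq_atTop.eventually_ge_atTop ((max C 0) ^ 2)] with n hn
    nlinarith [norm_nonneg (k n), le_max_left C 0, le_max_right C (0:ℝ)]
  have hinv0 : Filter.Tendsto (fun n => ‖k n‖⁻¹) Filter.atTop (nhds 0) :=
    tendsto_inv_atTop_zero.comp hk_atTop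
  -- normalized vectors
  set u : ℕ → Hb := fun n => ‖k n‖⁻¹ • k n with hudef
  have hu1 : ∀ n, ‖u n‖ ≤ 1 := by
    intro n
    rw [hudef]
    simp only [norm_smul, norm_inv, norm_norm]
    rcases eq_or_ne ‖k n‖ 0 with h | h
    · simp [h]
    · rw [inv_mul_cancel₀ h]
  -- inner products with kernels
  have hinner_k : ∀ (g : Hb) n, (inner ℂ (k n) g : ℂ) = D.hbFun g (l n) := by
    intro g n
    exact (D.hb_repro g _ (hl n)).symm
  have hinner_u : ∀ (g : Hb) n, (inner ℂ (u n) g : ℂ) = (‖k n‖⁻¹ : ℝ) • (inner ℂ (k n) g : ℂ) := by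
    intro g n
    rw [hudef]
    exact inner_smul_real_left _ _ _
  -- convergence on span elements
  set K : Submodule ℂ Hb := Submodule.span ℂ (D.hbker '' (Metric.ball (0:ℂ) 1)) with hKdef
  have hbdd : ∀ g ∈ K, ∃ C : ℝ, ∀ n, ‖D.hbFun g (l n)‖ ≤ C := by
    intro g hg
    induction hg using Submodule.span_induction with
    | mem x hx =>
      obtain ⟨μ, hμ, rfl⟩ := hx
      refine ⟨2 / (1 - ‖μ‖), fun n => ?_⟩
      have hμ1 : ‖μ‖ < 1 := by simpa using hμ
      have hval := D.hbker_eq μ hμ _ (hl n)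
      rw [hval]
      rw [norm_div]
      have hnum : ‖1 - (starRingEnd ℂ) (b μ) * b (l n)‖ ≤ 2 := by
        calc ‖1 - (starRingEnd ℂ) (b μ) * b (l n)‖
            ≤ ‖(1:ℂ)‖ + ‖(starRingEnd ℂ) (b μ) * b (l n)‖ := norm_sub_le _ _
          _ ≤ 1 + 1 * 1 := by
              rw [norm_one, norm_mul, RCLike.norm_conj]
              have := hb1 μ hμ
              have := hb1 _ (hl n)
              gcongr
          _ = 2 := by norm_num
      have hden : 1 - ‖μ‖ ≤ ‖1 - (starRingEnd ℂ) μ * l n‖ := by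
        calc 1 - ‖μ‖ ≤ 1 - ‖(starRingEnd ℂ) μ * l n‖ := by
              rw [norm_mul, RCLike.norm_conj]
              have h1 : ‖μ‖ * ‖l n‖ ≤ ‖μ‖ * 1 :=
                mul_le_mul_of_nonneg_left (le_of_lt (hlnlt n)) (norm_nonneg _)
              simp only [mul_one] at h1
              linarith
          _ ≤ ‖(1:ℂ)‖ - ‖(starRingEnd ℂ) μ * l n‖ := by rw [norm_one]
          _ ≤ ‖1 - (starRingEnd ℂ) μ * l n‖ := by
              exact norm_sub_norm_le _ _
      have hden_pos' : (0:ℝ) < 1 - ‖μ‖ := by linarith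
      exact div_le_div₀ (by norm_num) hnum hden_pos' hden
    | zero => exact ⟨0, fun n => by simp⟩
    | add x y hx hy ihx ihy =>
      obtain ⟨C1, h1⟩ := ihx
      obtain ⟨C2, h2⟩ := ihy
      refine ⟨C1 + C2, fun n => ?_⟩
      have : D.hbFun (x + y) (l n) = D.hbFun x (l n) + D.hbFun y (l n) := by
        rw [map_add]; rfl
      rw [this]
      exact (norm_add_le _ _).trans (add_le_add (h1 n) (h2 n))
    | smul c x hx ihx =>
      obtain ⟨C, h1⟩ := ihx
      refine ⟨‖c‖ * C, fun n => ?_⟩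
      have : D.hbFun (c • x) (l n) = c • D.hbFun x (l n) := by
        rw [_root_.map_smul]; rfl
      rw [this, smul_eq_mul, norm_mul]
      exact mul_le_mul_of_nonneg_left (h1 n) (norm_nonneg c)
  have hspan : ∀ g ∈ K, Filter.Tendsto (fun n => (inner ℂ (u n) g : ℂ))
      Filter.atTop (nhds 0) := by
    intro g hg
    obtain ⟨C, hC⟩ := hbdd g hg
    have hC0 : 0 ≤ C := le_trans (norm_nonneg _) (hC 0)
    rw [tendsto_zero_iff_norm_tendsto_zero]
    have hbound : ∀ n, ‖(inner ℂ (u n) g : ℂ)‖ ≤ ‖k n‖⁻¹ * C := by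
      intro n
      rw [hinner_u, hinner_k]
      rw [norm_smul]
      simp only [Real.norm_eq_abs, abs_inv, abs_norm]
      exact mul_le_mul_of_nonneg_left (hC n) (by positivity)
    have hlim0 : Filter.Tendsto (fun n => ‖k n‖⁻¹ * C) Filter.atTop (nhds 0) := by
      simpa using hinv0.mul_const C
    exact squeeze_zero (fun n => norm_nonneg _) hbound hlim0
  -- density of K
  have hKtop : K.topologicalClosure = ⊤ := by
    rw [Submodule.topologicalClosure_eq_top_iff]
    rw [Submodule.eq_bot_iff]
    intro f hf
    apply D.hbFun_inj
    intro z hz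
    have hker : D.hbker z ∈ K := Submodule.subset_span ⟨z, hz, rfl⟩
    have := hf (D.hbker z) hker
    rw [D.hb_repro f z hz, this]
  have hdense : Dense (K : Set Hb) := by
    have := congrArg (fun (S : Submodule ℂ Hb) => (S : Set Hb)) hKtop
    simp only [Submodule.topologicalClosure_coe, Submodule.top_coe] at this
    rw [dense_iff_closure_eq]
    exact this
  -- main argument
  intro f
  rw [tendsto_zero_iff_norm_tendsto_zero]
  rw [Metric.tendsto_atTop]
  intro ε hε
  obtain ⟨g, hgc, hgK⟩ : ∃ g, dist f g < ε / 2 ∧ g ∈ K := by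
    have hf : f ∈ closure (K : Set Hb) := hdense f
    rw [Metric.mem_closure_iff] at hf
    obtain ⟨g, hg1, hg2⟩ := hf (ε / 2) (by linarith)
    exact ⟨g, hg2, hg1⟩
  have hgspan := hspan g hgK
  rw [tendsto_zero_iff_norm_tendsto_zero, Metric.tendsto_atTop] at hgspan
  obtain ⟨N, hN⟩ := hgspan (ε / 2) (by linarith)
  refine ⟨N, fun n hn => ?_⟩
  have h1 := hN n hn
  rw [Real.dist_eq] at h1 ⊢
  have hsplit : (inner ℂ (u n) f : ℂ) = inner ℂ (u n) g + inner ℂ (u n) (f - g) := by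
    rw [inner_sub_right]; ring
  have h2 : ‖(inner ℂ (u n) (f - g) : ℂ)‖ ≤ ‖u n‖ * ‖f - g‖ := norm_inner_le_norm _ _
  have h3 : ‖u n‖ * ‖f - g‖ ≤ 1 * ‖f - g‖ :=
    mul_le_mul_of_nonneg_right (hu1 n) (norm_nonneg _)
  have h4 : ‖f - g‖ = dist f g := (dist_eq_norm f g).symm
  have h5 : ‖(inner ℂ (u n) f : ℂ)‖ ≤ ‖(inner ℂ (u n) g : ℂ)‖ + ‖(inner ℂ (u n) (f - g) : ℂ)‖ := by
    rw [hsplit]; exact norm_add_le _ _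
  have h6 : |‖(inner ℂ (u n) g : ℂ)‖ - 0| < ε / 2 := h1
  rw [sub_zero] at h6 ⊢
  rw [_root_.abs_of_nonneg (norm_nonneg _)] at h6 ⊢
  calc ‖(inner ℂ (u n) f : ℂ)‖ ≤ ‖(inner ℂ (u n) g : ℂ)‖ + ‖(inner ℂ (u n) (f - g) : ℂ)‖ := h5
    _ < ε / 2 + ‖(inner ℂ (u n) (f - g) : ℂ)‖ := by linarith
    _ ≤ ε / 2 + 1 * ‖f - g‖ := by linarith [h2.trans h3]
    _ < ε / 2 + ε / 2 := by rw [one_mul, h4]; linarith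
    _ = ε := by ring
end
end
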